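/- Let X be a proper CAT(-1) space with base point o. If d(x_n, o) is bounded and {y_n} → ξ' ∈ ∂∞X, then for all (z,z') ∈ X × X, lim_{n→∞} (d_max((x_n,y_n),(z,z')) − d_max((x_n,y_n),(o,o))) = β^o_{ξ'}(z'). -/
import Mathlib


open Filter Topology Metric

/-- `m` is a midpoint of `x` and `y`. -/
def IsMidpoint {X : Type*} [MetricSpace X] (x m y : X) : Prop :=
  dist x m = dist x y / 2 ∧ dist m y = dist x y / 2

/-- `X` is a CAT(-1) space: it is geodesic (has midpoints; for complete spaces this
gives geodesics) and satisfies the hyperbolic median comparison inequality, which for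
geodesic spaces is equivalent to the usual comparison-triangle definition with `ℍ²`. -/
def IsCATminus1 (X : Type*) [MetricSpace X] : Prop :=
  (∀ x y : X, ∃ m, IsMidpoint x m y) ∧
    ∀ x y z m : X, IsMidpoint y m z →
      Real.cosh (dist x m) * Real.cosh (dist y z / 2) ≤
        (Real.cosh (dist x y) + Real.cosh (dist x z)) / 2

/-- `X` is a CAT(0) space: it has midpoints and satisfies the CN-inequality of
Bruhat–Tits, equivalent to the comparison-triangle definition with `𝔼²`. -/
def IsCAT0 (X : Type*) [MetricSpace X] : Prop :=
  (∀ x y : X, ∃ m, IsMidpoint x m y) ∧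
    ∀ x y z m : X, IsMidpoint y m z →
      dist x m ^ 2 ≤ dist x y ^ 2 / 2 + dist x z ^ 2 / 2 - dist y z ^ 2 / 4

/-- A geodesic ray (only the restriction of `c` to `[0, ∞)` matters). -/
def IsRay {X : Type*} [MetricSpace X] (c : ℝ → X) : Prop :=
  ∀ s t : ℝ, 0 ≤ s → 0 ≤ t → dist (c s) (c t) = |s - t|

/-- A parametrized (bi-infinite) geodesic, i.e. an isometric embedding `ℝ → X`. -/
def IsGeodesic {X : Type*} [MetricSpace X] (g : ℝ → X) : Prop :=
  ∀ s t : ℝ, dist (g s) (g t) = |s - t|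

/-- Two rays are asymptotic, i.e. determine the same point of `∂∞X`. -/
def RayEquiv {X : Type*} [MetricSpace X] (c c' : ℝ → X) : Prop :=
  ∃ C : ℝ, ∀ t : ℝ, 0 ≤ t → dist (c t) (c' t) ≤ C

/-- The Busemann function `β^{c 0}_{c(∞)}` of the ray `c`, normalized to vanish at `c 0`.
Since `t ↦ dist y (c t) - t` is nonincreasing and bounded below, this infimum is the
limit `lim_{t → ∞} (dist y (c t) - t)`. -/
noncomputable def busemann {X : Type*} [MetricSpace X] (c : ℝ → X) (y : X) : ℝ :=
  sInf {r : ℝ | ∃ t : ℝ, 0 ≤ t ∧ r = dist y (c t) - t}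

/-- `σ` restricted to `[a, b]` is a geodesic segment. -/
def IsSegParam {X : Type*} [MetricSpace X] (σ : ℝ → X) (a b : ℝ) : Prop :=
  ∀ s t : ℝ, s ∈ Set.Icc a b → t ∈ Set.Icc a b → dist (σ s) (σ t) = |s - t|

/-- Cone-topology convergence of the sequence `x` to the boundary point `c(∞) ∈ ∂∞X`,
where `c` is a geodesic ray issued from the base point `o`: the distances to `o` diverge
and the geodesic segments `σ n` from `o` to `x n` converge pointwise to `c`. -/
def TendstoRay {X : Type*} [MetricSpace X] (x : ℕ → X) (o : X) (c : ℝ → X) : Prop :=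
  IsRay c ∧ c 0 = o ∧
  Tendsto (fun n => dist o (x n)) atTop atTop ∧
  ∃ σ : ℕ → ℝ → X,
    (∀ n, σ n 0 = o ∧ σ n (dist o (x n)) = x n ∧ IsSegParam (σ n) 0 (dist o (x n))) ∧
    ∀ t : ℝ, 0 ≤ t → Tendsto (fun n => σ n t) atTop (𝓝 (c t))


/-- Auxiliary purely real inequality extracted from the CAT(-1) median comparison. -/
lemma cosh_step_aux {A B D E : ℝ} (hE : 0 ≤ E)
    (h : Real.cosh A * Real.cosh B ≤ (Real.cosh D + Real.cosh E) / 2) :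
    Real.exp (A + B) ≤ Real.exp E + (2 * Real.cosh D + 1) := by
  have h1 : Real.exp A ≤ 2 * Real.cosh A := by
    rw [Real.cosh_eq]; have := (Real.exp_pos (-A)).le; linarith
  have h2 : Real.exp B ≤ 2 * Real.cosh B := by
    rw [Real.cosh_eq]; have := (Real.exp_pos (-B)).le; linarith
  have h3 : 2 * Real.cosh E ≤ Real.exp E + 1 := by
    rw [Real.cosh_eq]
    have : Real.exp (-E) ≤ 1 := Real.exp_le_one_iff.2 (by linarith)
    linarith
  have h4 : Real.exp A * Real.exp B ≤ (2 * Real.cosh A) * (2 * Real.cosh B) :=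
    mul_le_mul h1 h2 (Real.exp_pos B).le (by nlinarith [Real.one_le_cosh A])
  rw [← Real.exp_add] at h4
  nlinarith [h4, h, h3]

/-- Case (I): if `d(x n, o)` is bounded and `y n → ξ'` in `∂∞X` (with `c'` the ray
from `o` to `ξ'`), then the normalized max-distance functions converge pointwise to
`β^o_ξ'(z')`. -/
theorem dmax_horofunction_singular_one_factor {X : Type*} [MetricSpace X] [ProperSpace X]
    (hX : IsCATminus1 X) (o : X) (c' : ℝ → X) (x y : ℕ → X)
    (hx : ∃ R : ℝ, ∀ n, dist (x n) o ≤ R)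
    (hy : TendstoRay y o c') :
    ∀ z z' : X,
      Tendsto (fun n => max (dist (x n) z) (dist (y n) z')
          - max (dist (x n) o) (dist (y n) o)) atTop (𝓝 (busemann c' z')) := by
  obtain ⟨hray, hc0, htn, σ, hσ, hσconv⟩ := hy
  obtain ⟨R, hR⟩ := hx
  intro z z'
  set C : ℝ := 2 * Real.cosh (dist z' o) + 1 with hCdef
  have hC : (0:ℝ) < C := by
    have := Real.one_le_cosh (dist z' o); rw [hCdef]; linarith
  have hσ0 : ∀ n, σ n 0 = o := fun n => (hσ n).1
  have hσend : ∀ n, σ n (dist o (y n)) = y n := fun n => (hσ n).2.1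
  have hseg : ∀ n, IsSegParam (σ n) 0 (dist o (y n)) := fun n => (hσ n).2.2
  -- distance along the ray
  have hrayd : ∀ t : ℝ, 0 ≤ t → dist o (c' t) = t := by
    intro t ht
    have := hray 0 t le_rfl ht
    rw [hc0] at this
    rw [this, zero_sub, abs_neg, abs_of_nonneg ht]
  -- the Busemann set
  set S : Set ℝ := {r : ℝ | ∃ t : ℝ, 0 ≤ t ∧ r = dist z' (c' t) - t} with hSdef
  have hSne : S.Nonempty := ⟨dist z' (c' 0) - 0, 0, le_rfl, rfl⟩
  have hbdd : BddBelow S := by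
    refine ⟨-(dist z' o), ?_⟩
    rintro r ⟨t, ht, rfl⟩
    have h1 : dist o (c' t) = t := hrayd t ht
    have h2 := dist_triangle o z' (c' t)
    rw [h1, dist_comm o z'] at h2
    linarith
  have hbus : busemann c' z' = sInf S := rfl
  -- monotonicity of s ↦ dist z' (σ n s) - s
  have hmono : ∀ n, ∀ s t : ℝ, 0 ≤ s → s ≤ t → t ≤ dist o (y n) →
      dist z' (σ n t) - t ≤ dist z' (σ n s) - s := by
    intro n s t hs hst htL
    have h1 := hseg n s t ⟨hs, le_trans hst htL⟩ ⟨le_trans hs hst, htL⟩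
    rw [abs_sub_comm, abs_of_nonneg (by linarith)] at h1
    have h2 := dist_triangle z' (σ n s) (σ n t)
    linarith
  -- one comparison step
  have hstep : ∀ n, ∀ s : ℝ, 0 ≤ s → s ≤ dist o (y n) →
      Real.exp (dist z' (σ n (s/2)) - s/2) ≤
        Real.exp (dist z' (σ n s) - s) + C * Real.exp (-s) := by
    intro n s hs hsL
    have hmem0 : (0:ℝ) ∈ Set.Icc 0 (dist o (y n)) := ⟨le_rfl, dist_nonneg⟩
    have hmemh : s/2 ∈ Set.Icc 0 (dist o (y n)) := ⟨by linarith, by linarith⟩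
    have hmems : s ∈ Set.Icc 0 (dist o (y n)) := ⟨hs, hsL⟩
    have hm1 : dist o (σ n (s/2)) = s/2 := by
      rw [← hσ0 n]
      rw [hseg n 0 (s/2) hmem0 hmemh, zero_sub, abs_neg, abs_of_nonneg (by linarith)]
    have hm2 : dist (σ n (s/2)) (σ n s) = s/2 := by
      rw [hseg n (s/2) s hmemh hmems]
      rw [show s/2 - s = -(s/2) by ring, abs_neg, abs_of_nonneg (by linarith)]
    have hm3 : dist o (σ n s) = s := by
      rw [← hσ0 n]
      rw [hseg n 0 s hmem0 hmems, zero_sub, abs_neg, abs_of_nonneg hs]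
    have hmid : IsMidpoint o (σ n (s/2)) (σ n s) := by
      constructor
      · rw [hm1, hm3]
      · rw [hm2, hm3]
    have hcat := hX.2 z' o (σ n s) (σ n (s/2)) hmid
    rw [hm3] at hcat
    have hkey := cosh_step_aux dist_nonneg hcat
    have hmul := mul_le_mul_of_nonneg_right hkey (Real.exp_pos (-s)).le
    calc Real.exp (dist z' (σ n (s/2)) - s/2)
        = Real.exp (dist z' (σ n (s/2)) + s/2) * Real.exp (-s) := by
          rw [← Real.exp_add]; congr 1; ring
      _ ≤ (Real.exp (dist z' (σ n s)) + C) * Real.exp (-s) := hmul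
      _ = Real.exp (dist z' (σ n s) - s) + C * Real.exp (-s) := by
          rw [add_mul, ← Real.exp_add, sub_eq_add_neg]
  -- iterated halving
  have hiter : ∀ n, ∀ k : ℕ, 2 ≤ dist o (y n) / 2^k →
      Real.exp (dist z' (σ n (dist o (y n) / 2^k)) - dist o (y n) / 2^k) ≤
        Real.exp (dist z' (y n) - dist o (y n)) + C * Real.exp (-(dist o (y n) / 2^k)) := by
    intro n k
    induction k with
    | zero =>
        intro _
        simp only [pow_zero, div_one]
        rw [hσend n]
        have : 0 < C * Real.exp (-dist o (y n)) := by positivity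
        linarith
    | succ k ih =>
        intro h
        have h2k : (0:ℝ) < 2^k := by positivity
        have hdiv : dist o (y n) / 2^(k+1) = (dist o (y n) / 2^k) / 2 := by
          rw [pow_succ]; ring
        have hk2 : 2 ≤ dist o (y n) / 2^k := by rw [hdiv] at h; linarith
        have hone : (1:ℝ) ≤ 2^k := one_le_pow₀ (by norm_num)
        have hsc := hstep n (dist o (y n) / 2^k) (by linarith)
          (div_le_self dist_nonneg hone)
        rw [← hdiv] at hsc
        have hih := ih hk2
        have hhalf : 2 * Real.exp (-(dist o (y n) / 2^k)) ≤
            Real.exp (-(dist o (y n) / 2^(k+1))) := by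
          have h1 : Real.exp (-(dist o (y n) / 2^(k+1))) ≤ Real.exp (-2) :=
            Real.exp_le_exp.2 (by linarith)
          have h2 : -(dist o (y n) / 2^k) =
              -(dist o (y n) / 2^(k+1)) + -(dist o (y n) / 2^(k+1)) := by
            rw [hdiv]; ring
          have he2 : Real.exp (-2) ≤ 1/2 := by
            rw [Real.exp_neg]
            have h3 : (3:ℝ) ≤ Real.exp 2 := by nlinarith [Real.add_one_le_exp (2:ℝ)]
            have h4 : Real.exp 2 * (Real.exp 2)⁻¹ = 1 := mul_inv_cancel₀ (by positivity)
            nlinarith [Real.exp_pos 2, inv_nonneg.2 (Real.exp_pos 2).le]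
          rw [h2, Real.exp_add]
          nlinarith [Real.exp_pos (-(dist o (y n) / 2^(k+1))), h1, he2]
        have hfin : C * Real.exp (-(dist o (y n) / 2^k)) +
            C * Real.exp (-(dist o (y n) / 2^k)) ≤
            C * Real.exp (-(dist o (y n) / 2^(k+1))) := by
          have := mul_le_mul_of_nonneg_left hhalf hC.le
          linarith [this]
        calc Real.exp (dist z' (σ n (dist o (y n) / 2^(k+1))) - dist o (y n) / 2^(k+1))
            ≤ Real.exp (dist z' (σ n (dist o (y n) / 2^k)) - dist o (y n) / 2^k)
              + C * Real.exp (-(dist o (y n) / 2^k)) := hsc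
          _ ≤ (Real.exp (dist z' (y n) - dist o (y n))
              + C * Real.exp (-(dist o (y n) / 2^k)))
              + C * Real.exp (-(dist o (y n) / 2^k)) := by linarith
          _ ≤ Real.exp (dist z' (y n) - dist o (y n))
              + C * Real.exp (-(dist o (y n) / 2^(k+1))) := by linarith
  -- main estimate at a fixed time T
  have hTlem : ∀ T : ℝ, 4 ≤ T → ∀ n, T ≤ dist o (y n) →
      Real.exp (dist z' (σ n T) - T) ≤
        Real.exp (dist z' (y n) - dist o (y n)) + C * Real.exp (-(T/2)) := by
    intro T hT4 n hTt
    set L := dist o (y n) with hLdef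
    have hT0 : (0:ℝ) < T := by linarith
    have hex : ∃ k : ℕ, L ≤ T * 2^k := by
      obtain ⟨k, hk⟩ := pow_unbounded_of_one_lt (L / T) (one_lt_two (α := ℝ))
      exact ⟨k, by rw [div_lt_iff₀ hT0] at hk; nlinarith⟩
    classical
    set k := Nat.find hex with hkdef
    have hk1 : L ≤ T * 2^k := Nat.find_spec hex
    have h2k : (0:ℝ) < 2^k := by positivity
    have hs_le_T : L / 2^k ≤ T := by rw [div_le_iff₀ h2k]; linarith [hk1]
    have hs_gt : T/2 < L / 2^k := by
      rcases Nat.eq_zero_or_pos k with h0 | hpos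
      · rw [h0]; simp only [pow_zero, div_one]; linarith
      · have hmin := Nat.find_min hex (m := k - 1) (by omega)
        push_neg at hmin
        have hkk : k - 1 + 1 = k := by omega
        have : T * 2^(k-1) < L := hmin
        have h2 : (2:ℝ)^k = 2^(k-1) * 2 := by rw [← pow_succ, hkk]
        rw [lt_div_iff₀ h2k, h2]
        nlinarith [this]
    have hs2 : 2 ≤ L / 2^k := by linarith
    have hmain := hiter n k hs2
    have hmono' := hmono n (L / 2^k) T (by linarith) hs_le_T hTt
    have herr : Real.exp (-(L / 2^k)) ≤ Real.exp (-(T/2)) :=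
      Real.exp_le_exp.2 (by linarith)
    calc Real.exp (dist z' (σ n T) - T)
        ≤ Real.exp (dist z' (σ n (L / 2^k)) - L / 2^k) := Real.exp_le_exp.2 hmono'
      _ ≤ Real.exp (dist z' (y n) - L) + C * Real.exp (-(L / 2^k)) := hmain
      _ ≤ Real.exp (dist z' (y n) - L) + C * Real.exp (-(T/2)) := by
          have := mul_le_mul_of_nonneg_left herr hC.le; linarith
  -- convergence of the normalized distance along y
  have hv : Tendsto (fun n => dist z' (y n) - dist o (y n)) atTop (𝓝 (busemann c' z')) := by
    rw [hbus]
    rw [tendsto_order]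
    constructor
    · -- lower bound
      intro b hb
      set δ : ℝ := (Real.exp (sInf S) - Real.exp b) / 2 with hδdef
      have hδ : 0 < δ := by
        have := Real.exp_lt_exp.2 hb; rw [hδdef]; linarith
      set T : ℝ := max 4 (2 * (Real.log (C / δ) + 1)) with hTdef
      have hT4 : (4:ℝ) ≤ T := le_max_left _ _
      have hTerr : C * Real.exp (-(T/2)) ≤ δ := by
        have hlog : Real.log (C / δ) + 1 ≤ T / 2 := by
          have := le_max_right (4:ℝ) (2 * (Real.log (C / δ) + 1)); linarith
        have h1 : Real.exp (-(T/2)) ≤ Real.exp (-(Real.log (C / δ) + 1)) :=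
          Real.exp_le_exp.2 (by linarith)
        have h2 : Real.exp (-(Real.log (C / δ) + 1)) = (δ / C) * Real.exp (-1) := by
          rw [show -(Real.log (C / δ) + 1) = -Real.log (C / δ) + (-1) by ring,
            Real.exp_add, Real.exp_neg, Real.exp_log (by positivity), inv_div]
        have h3 : Real.exp (-1) ≤ 1 := Real.exp_le_one_iff.2 (by norm_num)
        have h4 : C * Real.exp (-(T/2)) ≤ C * ((δ / C) * Real.exp (-1)) := by
          rw [← h2]; exact mul_le_mul_of_nonneg_left h1 hC.le
        have h5 : C * ((δ / C) * Real.exp (-1)) = δ * Real.exp (-1) := by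
          field_simp
        rw [h5] at h4
        nlinarith [Real.exp_pos (-1), h3, h4, hδ]
      have hβT : sInf S ≤ dist z' (c' T) - T :=
        csInf_le hbdd ⟨T, by linarith, rfl⟩
      have hbase : Tendsto (fun n => dist z' (σ n T) - T) atTop
          (𝓝 (dist z' (c' T) - T)) :=
        (tendsto_const_nhds.dist (hσconv T (by linarith))).sub tendsto_const_nhds
      have hconvT : Tendsto (fun n => Real.exp (dist z' (σ n T) - T)) atTop
          (𝓝 (Real.exp (dist z' (c' T) - T))) :=
        (Real.continuous_exp.tendsto _).comp hbase
      have hstrict : Real.exp (sInf S) - δ < Real.exp (dist z' (c' T) - T) := by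
        have := Real.exp_le_exp.2 hβT; linarith
      filter_upwards [htn.eventually_ge_atTop T, hconvT.eventually_const_lt hstrict]
        with n h1 h2
      have h3 := hTlem T hT4 n h1
      have h4 : Real.exp b < Real.exp (dist z' (y n) - dist o (y n)) := by
        have hbeq : Real.exp b = Real.exp (sInf S) - 2 * δ := by rw [hδdef]; ring
        linarith
      exact Real.exp_lt_exp.1 h4
    · -- upper bound
      intro b hb
      obtain ⟨r, hrS, hrb⟩ := exists_lt_of_csInf_lt hSne hb
      obtain ⟨t₀, ht₀, rfl⟩ := hrS
      have hconv : Tendsto (fun n => dist z' (σ n t₀) - t₀) atTop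
          (𝓝 (dist z' (c' t₀) - t₀)) :=
        (tendsto_const_nhds.dist (hσconv t₀ ht₀)).sub tendsto_const_nhds
      filter_upwards [htn.eventually_ge_atTop t₀, hconv.eventually_lt_const hrb]
        with n h1 h2
      have h3 := hmono n t₀ (dist o (y n)) ht₀ h1 le_rfl
      rw [hσend n] at h3
      linarith
  -- replace the max expression by the simple difference, eventually
  have heq : (fun n => dist z' (y n) - dist o (y n)) =ᶠ[atTop]
      (fun n => max (dist (x n) z) (dist (y n) z') - max (dist (x n) o) (dist (y n) o)) := by
    filter_upwards [htn.eventually_ge_atTop (R + dist o z + dist o z')] with n hn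
    have hd0 : 0 ≤ dist o z := dist_nonneg
    have hd1 : 0 ≤ dist o z' := dist_nonneg
    have hxz : dist (x n) z ≤ R + dist o z := by
      have := dist_triangle (x n) o z; linarith [hR n]
    have hyz' : R + dist o z ≤ dist (y n) z' := by
      have := dist_triangle o z' (y n)
      rw [dist_comm z' (y n)] at this
      linarith
    have hxo : dist (x n) o ≤ dist (y n) o := by
      rw [dist_comm (y n) o]; linarith [hR n]
    rw [max_eq_right (le_trans hxz hyz'), max_eq_right hxo,
      dist_comm (y n) z', dist_comm (y n) o]
  exact hv.congr' heq
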